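/- arXiv:2202.04191 — 2 statements merged into one kernel-verified Lean document; each statement's English description precedes it below -/
import Mathlib

section
/- Let M = [[A, B, 0],[C, D, 0],[E, F, L]] with A, L invertible and S := D − C·A⁻¹·B invertible, and let P := [[A, B, 0],[0, S, 0],[0, 0, L]]. Then the characteristic polynomial of M·P⁻¹ equals (X − 1)^n, where n is the total dimension |n₁| + |n₂| + |n₃|; equivalently, every (complex) eigenvalue of the right-preconditioned matrix M·P⁻¹ equals 1. -/
open Matrix Polynomial

lemma charpoly_one_aux {n : Type*} [Fintype n] [DecidableEq n] {R : Type*} [CommRing R] :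
    (1 : Matrix n n R).charpoly = (X - 1) ^ Fintype.card n := by
  have : charmatrix (1 : Matrix n n R) = diagonal fun _ => (X - 1 : R[X]) := by
    ext i j
    by_cases h : i = j <;>
      simp [charmatrix_apply_eq, charmatrix_apply_ne, h, diagonal, Matrix.one_apply]
  rw [Matrix.charpoly, this, det_diagonal]
  simp

/-- With the exact block triangular preconditioner
`P = [[A, B, 0],[0, S, 0],[0, 0, L]]` (with `S = D − C·A⁻¹·B` the Schur
complement), the characteristic polynomial of `M·P⁻¹` is `(X − 1)^n` where `n`
is the total dimension; equivalently, every complex eigenvalue of `M·P⁻¹`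
equals `1`. -/
theorem charpoly_right_preconditioned
    {n₁ n₂ n₃ : Type*} [Fintype n₁] [Fintype n₂] [Fintype n₃]
    [DecidableEq n₁] [DecidableEq n₂] [DecidableEq n₃]
    (A : Matrix n₁ n₁ ℝ) (B : Matrix n₁ n₂ ℝ) (C : Matrix n₂ n₁ ℝ)
    (D : Matrix n₂ n₂ ℝ) (E : Matrix n₃ n₁ ℝ) (F : Matrix n₃ n₂ ℝ)
    (L : Matrix n₃ n₃ ℝ)
    (hA : IsUnit A) (hL : IsUnit L) (hS : IsUnit (D - C * A⁻¹ * B))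
    (M : Matrix (n₁ ⊕ n₂ ⊕ n₃) (n₁ ⊕ n₂ ⊕ n₃) ℝ)
    (hM : M = Matrix.fromBlocks A (Matrix.fromCols B 0)
        (Matrix.fromRows C E) (Matrix.fromBlocks D 0 F L))
    (P : Matrix (n₁ ⊕ n₂ ⊕ n₃) (n₁ ⊕ n₂ ⊕ n₃) ℝ)
    (hP : P = Matrix.fromBlocks A (Matrix.fromCols B 0)
        0 (Matrix.fromBlocks (D - C * A⁻¹ * B) 0 0 L)) :
    (M * P⁻¹).charpoly
        = (X - 1) ^ (Fintype.card n₁ + Fintype.card n₂ + Fintype.card n₃) ∧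
    ∀ z : ℂ, (((M * P⁻¹).map (algebraMap ℝ ℂ)).charpoly).IsRoot z → z = 1 := by
  set S := D - C * A⁻¹ * B with hSdef
  have hAinv : A⁻¹ * A = 1 := nonsing_inv_mul A (isUnit_iff_isUnit_det A |>.mp hA)
  have hSinv : S⁻¹ * S = 1 := nonsing_inv_mul S (isUnit_iff_isUnit_det S |>.mp hS)
  set N : Matrix (n₁ ⊕ n₂ ⊕ n₃) (n₁ ⊕ n₂ ⊕ n₃) ℝ :=
    Matrix.fromBlocks 1 0 (Matrix.fromRows (C * A⁻¹) (E * A⁻¹))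
      (Matrix.fromBlocks 1 0 ((F - E * A⁻¹ * B) * S⁻¹) 1) with hN
  have hPunit : IsUnit P.det := by
    rw [hP, det_fromBlocks_zero₂₁, det_fromBlocks_zero₂₁]
    exact ((isUnit_iff_isUnit_det A |>.mp hA).mul
      ((isUnit_iff_isUnit_det S |>.mp hS).mul (isUnit_iff_isUnit_det L |>.mp hL)))
  have hNP : N * P = M := by
    rw [hN, hP, hM, fromBlocks_multiply, Matrix.fromRows_mul,
      Matrix.fromRows_mul_fromCols, fromBlocks_multiply, Matrix.fromBlocks_add,
      Matrix.fromBlocks_inj]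
    refine ⟨by simp, by simp, ?_, ?_⟩
    · rw [Matrix.mul_zero, add_zero, Matrix.fromRows_ext_iff]
      constructor <;> rw [Matrix.mul_assoc, hAinv, Matrix.mul_one]
    · rw [Matrix.fromBlocks_inj]
      refine ⟨?_, by simp, ?_, by simp⟩
      · rw [Matrix.one_mul, Matrix.mul_zero, add_zero, hSdef]
        abel
      · rw [Matrix.one_mul, add_zero,
          Matrix.mul_assoc (F - E * A⁻¹ * B) S⁻¹ S, hSinv, Matrix.mul_one]
        abel
  have hMP : M * P⁻¹ = N := by
    rw [← hNP, Matrix.mul_assoc, mul_nonsing_inv P hPunit, Matrix.mul_one]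
  have hchar : (M * P⁻¹).charpoly
      = (X - 1) ^ (Fintype.card n₁ + Fintype.card n₂ + Fintype.card n₃) := by
    rw [hMP, hN, Matrix.charpoly_fromBlocks_zero₁₂, Matrix.charpoly_fromBlocks_zero₁₂,
      charpoly_one_aux, charpoly_one_aux, charpoly_one_aux, ← pow_add, ← pow_add, add_assoc]
  refine ⟨hchar, fun z hz => ?_⟩
  rw [Matrix.charpoly_map, hchar] at hz
  simp only [Polynomial.map_pow, Polynomial.map_sub, Polynomial.map_X, Polynomial.map_one,
    IsRoot.def, eval_pow, eval_sub, eval_X, eval_one, pow_eq_zero_iff', sub_eq_zero] at hz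
  exact hz.1
end

section
/- Let M = [[A, B, 0],[C, D, 0],[E, F, L]] with A, L invertible and S := D − C·A⁻¹·B invertible, and let P := [[A, B, 0],[0, S, 0],[0, 0, L]]. Then (M·P⁻¹ − I)³ = 0; that is, M·P⁻¹ − I is nilpotent of index at most 3, so the minimal polynomial of M·P⁻¹ divides (X − 1)³ and a Krylov method such as GMRES applied to the exactly preconditioned system terminates in at most three iterations in exact arithmetic. -/
open Matrix Polynomial

/-- With the exact block triangular preconditioner, `M·P⁻¹ − I` is nilpotent of
index at most `3`: `(M·P⁻¹ − I)³ = 0`, and hence the minimal polynomial of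
`M·P⁻¹` divides `(X − 1)³`. -/
theorem right_preconditioned_nilpotent
    {n₁ n₂ n₃ : Type*} [Fintype n₁] [Fintype n₂] [Fintype n₃]
    [DecidableEq n₁] [DecidableEq n₂] [DecidableEq n₃]
    (A : Matrix n₁ n₁ ℝ) (B : Matrix n₁ n₂ ℝ) (C : Matrix n₂ n₁ ℝ)
    (D : Matrix n₂ n₂ ℝ) (E : Matrix n₃ n₁ ℝ) (F : Matrix n₃ n₂ ℝ)
    (L : Matrix n₃ n₃ ℝ)
    (hA : IsUnit A) (hL : IsUnit L) (hS : IsUnit (D - C * A⁻¹ * B))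
    (M : Matrix (n₁ ⊕ n₂ ⊕ n₃) (n₁ ⊕ n₂ ⊕ n₃) ℝ)
    (hM : M = Matrix.fromBlocks A (Matrix.fromCols B 0)
        (Matrix.fromRows C E) (Matrix.fromBlocks D 0 F L))
    (P : Matrix (n₁ ⊕ n₂ ⊕ n₃) (n₁ ⊕ n₂ ⊕ n₃) ℝ)
    (hP : P = Matrix.fromBlocks A (Matrix.fromCols B 0)
        0 (Matrix.fromBlocks (D - C * A⁻¹ * B) 0 0 L)) :
    (M * P⁻¹ - 1) ^ 3 = 0 ∧
    minpoly ℝ (M * P⁻¹) ∣ (X - 1 : Polynomial ℝ) ^ 3 := by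
  set S : Matrix n₂ n₂ ℝ := D - C * A⁻¹ * B with hSdef
  haveI : Invertible A := hA.invertible
  haveI : Invertible L := hL.invertible
  haveI : Invertible S := hS.invertible
  -- explicit inverse of P
  set Q : Matrix (n₁ ⊕ n₂ ⊕ n₃) (n₁ ⊕ n₂ ⊕ n₃) ℝ :=
    Matrix.fromBlocks A⁻¹ (Matrix.fromCols (-(A⁻¹ * (B * S⁻¹))) 0) 0
      (Matrix.fromBlocks S⁻¹ 0 0 L⁻¹) with hQ
  have e1 : Matrix.fromCols (-(B * S⁻¹)) (0 : Matrix n₁ n₃ ℝ) +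
      Matrix.fromCols (B * S⁻¹) (0 : Matrix n₁ n₃ ℝ) = 0 := by
    ext i (j | j) <;> simp [Matrix.fromCols]
  have hPQ : P * Q = 1 := by
    rw [hP, hQ]
    simp [Matrix.fromBlocks_multiply, Matrix.mul_fromCols,
      Matrix.fromCols_mul_fromBlocks, Matrix.mul_neg, ← Matrix.mul_assoc,
      Matrix.mul_inv_of_invertible, Matrix.fromBlocks_one, e1]
  have hPinv : P⁻¹ = Q := Matrix.inv_eq_right_inv hPQ
  -- the error matrix N is strictly block lower triangular
  set N : Matrix (n₁ ⊕ n₂ ⊕ n₃) (n₁ ⊕ n₂ ⊕ n₃) ℝ :=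
    Matrix.fromBlocks 0 0 (Matrix.fromRows (C * A⁻¹) (E * A⁻¹))
      (Matrix.fromBlocks 0 0 (F * S⁻¹ - E * A⁻¹ * B * S⁻¹) 0) with hN
  have hDS : D * S⁻¹ - C * A⁻¹ * B * S⁻¹ = 1 := by
    rw [show D * S⁻¹ - C * A⁻¹ * B * S⁻¹ = (D - C * A⁻¹ * B) * S⁻¹ from (sub_mul _ _ _).symm,
      ← hSdef, Matrix.mul_inv_of_invertible]
  have e2 : Matrix.fromCols
        (-(Matrix.fromRows (C * A⁻¹ * B * S⁻¹) (E * A⁻¹ * B * S⁻¹)))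
        (0 : Matrix (n₂ ⊕ n₃) n₃ ℝ) +
      Matrix.fromBlocks (D * S⁻¹) 0 (F * S⁻¹) 1 =
      Matrix.fromBlocks 1 0 (F * S⁻¹ - E * A⁻¹ * B * S⁻¹) 1 := by
    rw [Matrix.fromRows_neg, ← Matrix.fromRows_zero (m₁ := n₂) (m₂ := n₃),
      Matrix.fromCols_fromRows_eq_fromBlocks, Matrix.fromBlocks_add]
    simp [neg_add_eq_sub, hDS]
  have hMQ : M * P⁻¹ - 1 = N := by
    rw [hPinv, hM, hQ, hN]
    simp only [Matrix.fromBlocks_multiply, Matrix.mul_fromCols,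
      Matrix.fromCols_mul_fromBlocks, Matrix.fromRows_mul,
      Matrix.fromRows_mul_fromCols, Matrix.fromBlocks_mul_fromRows,
      Matrix.mul_neg, ← Matrix.mul_assoc, Matrix.mul_inv_of_invertible,
      Matrix.mul_zero, Matrix.zero_mul, Matrix.mul_one, Matrix.one_mul,
      add_zero, zero_add]
    rw [e1, e2, ← Matrix.fromBlocks_one (l := n₁) (m := n₂ ⊕ n₃),
      ← Matrix.fromBlocks_one (l := n₂) (m := n₃), sub_eq_add_neg,
      Matrix.fromBlocks_neg, Matrix.fromBlocks_add, Matrix.fromBlocks_neg,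
      Matrix.fromBlocks_add]
    simp
  have h3 : N ^ 3 = 0 := by
    have hN2 : N * N = Matrix.fromBlocks 0 0
        (Matrix.fromRows 0 ((F * S⁻¹ - E * A⁻¹ * B * S⁻¹) * (C * A⁻¹))) 0 := by
      rw [hN]
      simp [Matrix.fromBlocks_multiply, Matrix.fromBlocks_mul_fromRows,
        Matrix.fromRows_mul_fromCols]
    rw [pow_succ, pow_two, hN2, hN]
    simp [Matrix.fromBlocks_multiply, Matrix.fromRows_mul]
  have h1 : (M * P⁻¹ - 1) ^ 3 = 0 := by rw [hMQ]; exact h3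
  refine ⟨h1, minpoly.dvd ℝ _ ?_⟩
  simp only [map_pow, map_sub, aeval_X, Polynomial.aeval_one]
  exact h1
end
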